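/- A direct product of rings R₁ × ⋯ × R_n is left GF-closed if and only if each R_i is left GF-closed. -/

import Mathlib

open TensorProduct
universe u
section RTensor
variable (R : Type u) [Ring R]
def trel (A : Type u) [AddCommGroup A] [Module Rᵐᵒᵖ A]
    (B : Type u) [AddCommGroup B] [Module R B] : Submodule ℤ (TensorProduct ℤ A B) :=
  Submodule.span ℤ { z | ∃ (r : R) (a : A) (b : B),
    z = (MulOpposite.op r • a) ⊗ₜ[ℤ] b - a ⊗ₜ[ℤ] (r • b) }
def RTensor (A : Type u) [AddCommGroup A] [Module Rᵐᵒᵖ A]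
    (B : Type u) [AddCommGroup B] [Module R B] : Type u :=
  TensorProduct ℤ A B ⧸ trel R A B
noncomputable instance (A : Type u) [AddCommGroup A] [Module Rᵐᵒᵖ A]
    (B : Type u) [AddCommGroup B] [Module R B] : AddCommGroup (RTensor R A B) := by
  unfold RTensor; infer_instance
noncomputable instance (A : Type u) [AddCommGroup A] [Module Rᵐᵒᵖ A]
    (B : Type u) [AddCommGroup B] [Module R B] : Module ℤ (RTensor R A B) := by
  unfold RTensor; infer_instance
variable {A A' : Type u} [AddCommGroup A] [Module Rᵐᵒᵖ A] [AddCommGroup A'] [Module Rᵐᵒᵖ A']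
variable {B B' : Type u} [AddCommGroup B] [Module R B] [AddCommGroup B'] [Module R B']
noncomputable def RTensor.map (A : Type u) [AddCommGroup A] [Module Rᵐᵒᵖ A]
    (f : B →ₗ[R] B') : RTensor R A B →ₗ[ℤ] RTensor R A B' :=
  Submodule.mapQ (trel R A B) (trel R A B')
    (TensorProduct.map LinearMap.id f.toAddMonoidHom.toIntLinearMap)
    (by
      rw [trel, Submodule.span_le]
      rintro z ⟨r, a, b, rfl⟩
      simp only [SetLike.mem_coe, Submodule.mem_comap, map_sub, TensorProduct.map_tmul,
        LinearMap.id_coe, id_eq, AddMonoidHom.coe_toIntLinearMap, LinearMap.toAddMonoidHom_coe,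
        LinearMap.map_smul]
      have h : TensorProduct.map LinearMap.id f.toAddMonoidHom.toIntLinearMap
          ((MulOpposite.op r • a) ⊗ₜ[ℤ] b - a ⊗ₜ[ℤ] (r • b)) =
          (MulOpposite.op r • a) ⊗ₜ[ℤ] f b - a ⊗ₜ[ℤ] (r • f b) := by simp
      exact Submodule.subset_span ⟨r, a, f b, h⟩)
noncomputable def RTensor.lmap (g : A →ₗ[Rᵐᵒᵖ] A')
    (B : Type u) [AddCommGroup B] [Module R B] : RTensor R A B →ₗ[ℤ] RTensor R A' B :=
  Submodule.mapQ (trel R A B) (trel R A' B)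
    (TensorProduct.map g.toAddMonoidHom.toIntLinearMap LinearMap.id)
    (by
      rw [trel, Submodule.span_le]
      rintro z ⟨r, a, b, rfl⟩
      simp only [SetLike.mem_coe, Submodule.mem_comap, map_sub, TensorProduct.map_tmul,
        LinearMap.id_coe, id_eq, AddMonoidHom.coe_toIntLinearMap, LinearMap.toAddMonoidHom_coe,
        LinearMap.map_smul]
      have h : TensorProduct.map g.toAddMonoidHom.toIntLinearMap LinearMap.id
          ((MulOpposite.op r • a) ⊗ₜ[ℤ] b - a ⊗ₜ[ℤ] (r • b)) =
          (MulOpposite.op r • g a) ⊗ₜ[ℤ] b - g a ⊗ₜ[ℤ] (r • b) := by simp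
      exact Submodule.subset_span ⟨r, g a, b, h⟩)
end RTensor

/-- A left `R`-module `B` is flat if tensoring with it preserves injectivity
of maps of right `R`-modules. -/
def FlatModule (R : Type u) [Ring R] (B : Type u) [AddCommGroup B] [Module R B] : Prop :=
  ∀ (A A' : Type u) [AddCommGroup A] [Module Rᵐᵒᵖ A] [AddCommGroup A'] [Module Rᵐᵒᵖ A']
    (g : A →ₗ[Rᵐᵒᵖ] A'), Function.Injective g → Function.Injective (RTensor.lmap R g B)

/-- A witness that `M` is a Gorenstein flat left `R`-module: a doubly infinite exact
sequence of flat left `R`-modules `⋯ → F (-1) → F 0 → F 1 → ⋯` with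
`M ≅ Im (F 0 → F 1)`, which stays exact after applying `I ⊗_R −` for every
injective right `R`-module `I`. -/
structure GorensteinFlatWitness (R : Type u) [Ring R]
    (M : Type u) [AddCommGroup M] [Module R M] where
  F : ℤ → Type u
  [acg : ∀ i, AddCommGroup (F i)]
  [mod : ∀ i, Module R (F i)]
  d : ∀ i, F i →ₗ[R] F (i + 1)
  flat : ∀ i, FlatModule R (F i)
  exact : ∀ i, Function.Exact (d i) (d (i + 1))
  iso : M ≃ₗ[R] LinearMap.range (d 0)
  tensorExact : ∀ (I : Type u) [AddCommGroup I] [Module Rᵐᵒᵖ I], Module.Injective Rᵐᵒᵖ I →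
    ∀ i, Function.Exact (RTensor.map R I (d i)) (RTensor.map R I (d (i + 1)))

/-- A left `R`-module is Gorenstein flat if it admits a Gorenstein flat witness. -/
def IsGorensteinFlat (R : Type u) [Ring R]
    (M : Type u) [AddCommGroup M] [Module R M] : Prop :=
  Nonempty (GorensteinFlatWitness R M)

/-- `0 → A → B → C → 0` is a short exact sequence. -/
def IsShortExact {R : Type u} [Ring R] {A B C : Type u}
    [AddCommGroup A] [Module R A] [AddCommGroup B] [Module R B] [AddCommGroup C] [Module R C]
    (f : A →ₗ[R] B) (g : B →ₗ[R] C) : Prop :=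
  Function.Injective f ∧ Function.Exact f g ∧ Function.Surjective g

/-- A ring `R` is left GF-closed if the class of Gorenstein flat left `R`-modules is
closed under extensions. -/
def LeftGFClosed (R : Type u) [Ring R] : Prop :=
  ∀ (A B C : Type u) [AddCommGroup A] [Module R A] [AddCommGroup B] [Module R B]
    [AddCommGroup C] [Module R C] (f : A →ₗ[R] B) (g : B →ₗ[R] C),
    IsShortExact f g → IsGorensteinFlat R A → IsGorensteinFlat R C → IsGorensteinFlat R B



/-! ### API for `RTensor` -/

section RTensorAPI

variable {R : Type u} [Ring R]
variable {A A' : Type u} [AddCommGroup A] [Module Rᵐᵒᵖ A] [AddCommGroup A'] [Module Rᵐᵒᵖ A']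
variable {B B' : Type u} [AddCommGroup B] [Module R B] [AddCommGroup B'] [Module R B']

/-- The image of `a ⊗ b` in `RTensor R A B`. -/
noncomputable def RTensor.tmul (R : Type u) [Ring R] {A B : Type u}
    [AddCommGroup A] [Module Rᵐᵒᵖ A] [AddCommGroup B] [Module R B]
    (a : A) (b : B) : RTensor R A B :=
  Submodule.Quotient.mk (a ⊗ₜ[ℤ] b)

lemma RTensor.tmul_rel (r : R) (a : A) (b : B) :
    RTensor.tmul R (MulOpposite.op r • a) b = RTensor.tmul R a (r • b) :=
  (Submodule.Quotient.eq (trel R A B)).mpr (Submodule.subset_span ⟨r, a, b, rfl⟩)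

lemma RTensor.add_tmul (a a' : A) (b : B) :
    RTensor.tmul R (a + a') b = RTensor.tmul R a b + RTensor.tmul R a' b := by
  have : (Submodule.Quotient.mk ((a + a') ⊗ₜ[ℤ] b) :
      TensorProduct ℤ A B ⧸ trel R A B)
      = Submodule.Quotient.mk (a ⊗ₜ[ℤ] b) + Submodule.Quotient.mk (a' ⊗ₜ[ℤ] b) := by
    rw [← Submodule.Quotient.mk_add, TensorProduct.add_tmul]
  exact this

lemma RTensor.tmul_add (a : A) (b b' : B) :
    RTensor.tmul R a (b + b') = RTensor.tmul R a b + RTensor.tmul R a b' := by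
  have : (Submodule.Quotient.mk (a ⊗ₜ[ℤ] (b + b')) :
      TensorProduct ℤ A B ⧸ trel R A B)
      = Submodule.Quotient.mk (a ⊗ₜ[ℤ] b) + Submodule.Quotient.mk (a ⊗ₜ[ℤ] b') := by
    rw [← Submodule.Quotient.mk_add, TensorProduct.tmul_add]
  exact this

lemma RTensor.zero_tmul (b : B) : RTensor.tmul R (0 : A) b = 0 := by
  have : (Submodule.Quotient.mk ((0 : A) ⊗ₜ[ℤ] b) :
      TensorProduct ℤ A B ⧸ trel R A B) = 0 := by
    rw [TensorProduct.zero_tmul, Submodule.Quotient.mk_zero]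
  exact this

lemma RTensor.tmul_zero (a : A) : RTensor.tmul R a (0 : B) = 0 := by
  have : (Submodule.Quotient.mk (a ⊗ₜ[ℤ] (0 : B)) :
      TensorProduct ℤ A B ⧸ trel R A B) = 0 := by
    rw [TensorProduct.tmul_zero, Submodule.Quotient.mk_zero]
  exact this

lemma RTensor.tmul_sum {ι : Type*} (s : Finset ι) (a : A) (f : ι → B) :
    RTensor.tmul R a (∑ j ∈ s, f j) = ∑ j ∈ s, RTensor.tmul R a (f j) := by
  classical
  induction s using Finset.induction with
  | empty => simpa using RTensor.tmul_zero a
  | @insert j s h ih =>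
      rw [Finset.sum_insert h, Finset.sum_insert h, RTensor.tmul_add, ih]

/-- Extensionality: two `ℤ`-linear maps out of `RTensor R A B` agreeing on simple tensors
are equal. -/
lemma RTensor.hom_ext {C : Type*} [AddCommGroup C] [Module ℤ C]
    {φ ψ : RTensor R A B →ₗ[ℤ] C}
    (h : ∀ (a : A) (b : B), φ (RTensor.tmul R a b) = ψ (RTensor.tmul R a b)) : φ = ψ := by
  apply Submodule.linearMap_qext
  exact TensorProduct.ext' h

/-- Lift a bi-additive balanced map to `RTensor`. -/
noncomputable def RTensor.lift {C : Type u} [AddCommGroup C]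
    (f : A → B → C)
    (haddl : ∀ a a' b, f (a + a') b = f a b + f a' b)
    (haddr : ∀ a b b', f a (b + b') = f a b + f a b')
    (hrel : ∀ (r : R) a b, f (MulOpposite.op r • a) b = f a (r • b)) :
    RTensor R A B →ₗ[ℤ] C := by
  refine Submodule.liftQ (trel R A B) (TensorProduct.lift ?_) ?_
  · exact
      { toFun := fun a =>
          (AddMonoidHom.mk' (f a) (fun b b' => haddr a b b')).toIntLinearMap
        map_add' := fun a a' => by
          ext b; exact haddl a a' b
        map_smul' := fun z a => by
          ext b
          exact AddMonoidHom.map_zsmul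
            (AddMonoidHom.mk' (fun a => f a b) (fun a a' => haddl a a' b)) z a }
  · rw [trel, Submodule.span_le]
    rintro z ⟨r, a, b, rfl⟩
    simp only [SetLike.mem_coe, LinearMap.mem_ker, map_sub, TensorProduct.lift.tmul]
    show TensorProduct.lift _ ((MulOpposite.op r • a) ⊗ₜ[ℤ] b - a ⊗ₜ[ℤ] (r • b)) = 0
    rw [map_sub, TensorProduct.lift.tmul, TensorProduct.lift.tmul]
    show f (MulOpposite.op r • a) b - f a (r • b) = 0
    rw [hrel, sub_self]

@[simp] lemma RTensor.lift_tmul {C : Type u} [AddCommGroup C]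
    (f : A → B → C) (haddl) (haddr) (hrel) (a : A) (b : B) :
    RTensor.lift f haddl haddr hrel (RTensor.tmul R a b) = f a b := rfl

@[simp] lemma RTensor.map_tmul (f : B →ₗ[R] B') (a : A) (b : B) :
    RTensor.map R A f (RTensor.tmul R a b) = RTensor.tmul R a (f b) := rfl

@[simp] lemma RTensor.lmap_tmul (g : A →ₗ[Rᵐᵒᵖ] A') (a : A) (b : B) :
    RTensor.lmap R g B (RTensor.tmul R a b) = RTensor.tmul R (g a) b := rfl

lemma RTensor.map_id : RTensor.map R A (LinearMap.id : B →ₗ[R] B) = LinearMap.id :=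
  RTensor.hom_ext fun a b => by simp

lemma RTensor.map_comp {B'' : Type u} [AddCommGroup B''] [Module R B'']
    (f' : B' →ₗ[R] B'') (f : B →ₗ[R] B') :
    RTensor.map R A (f' ∘ₗ f) = RTensor.map R A f' ∘ₗ RTensor.map R A f :=
  RTensor.hom_ext fun a b => by simp

lemma RTensor.map_zero : RTensor.map R A (0 : B →ₗ[R] B') = 0 :=
  RTensor.hom_ext fun a b => by
    simp only [RTensor.map_tmul, LinearMap.zero_apply]
    exact RTensor.tmul_zero a

lemma RTensor.lmap_comm_map (g : A →ₗ[Rᵐᵒᵖ] A') (f : B →ₗ[R] B') :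
    RTensor.lmap R g B' ∘ₗ RTensor.map R A f
      = RTensor.map R A' f ∘ₗ RTensor.lmap R g B :=
  RTensor.hom_ext fun a b => by simp

end RTensorAPI



/-! ### Product rings: idempotents, components, restrictions -/

section ProdRing

variable {n : ℕ} (R : Fin n → Type u) [∀ i, Ring (R i)]

/-- The idempotent `e i` of the product ring. -/
def pe (i : Fin n) : ∀ j, R j := Pi.single i 1

lemma pe_single_mul (i : Fin n) (r : R i) (s : ∀ j, R j) :
    Pi.single i r * s = Pi.single i (r * s i) := by
  funext j
  by_cases h : j = i
  · subst h; simp [Pi.single_apply]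
  · simp [Pi.single_apply, h]

lemma pe_mul_single (i : Fin n) (r : R i) (s : ∀ j, R j) :
    s * Pi.single i r = Pi.single i (s i * r) := by
  funext j
  by_cases h : j = i
  · subst h; simp [Pi.single_apply]
  · simp [Pi.single_apply, h]

lemma pe_mul (i : Fin n) (s : ∀ j, R j) : pe R i * s = Pi.single i (s i) := by
  rw [pe, pe_single_mul, one_mul]

lemma mul_pe (i : Fin n) (s : ∀ j, R j) : s * pe R i = Pi.single i (s i) := by
  rw [pe, pe_mul_single, mul_one]

lemma pe_comm (i : Fin n) (s : ∀ j, R j) : pe R i * s = s * pe R i := by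
  rw [pe_mul, mul_pe]

lemma single_mul_single' (i : Fin n) (r r' : R i) :
    (Pi.single i r : ∀ j, R j) * Pi.single i r' = Pi.single i (r * r') := by
  rw [pe_single_mul, Pi.single_eq_same]

lemma pe_mul_pe (i : Fin n) : pe R i * pe R i = pe R i := by
  rw [pe, single_mul_single', one_mul]

lemma pe_orth {i j : Fin n} (h : i ≠ j) : pe R i * pe R j = 0 := by
  rw [pe_mul, pe, Pi.single_eq_of_ne h, Pi.single_zero]

lemma sum_pe : ∑ i, pe R i = 1 := by
  have := Finset.univ_sum_single (1 : ∀ j, R j)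
  simpa [pe] using this

section CompL

variable (i : Fin n) (M : Type u) [AddCommGroup M] [Module (∀ j, R j) M]

/-- The `i`-th component of a left module over the product ring, as a `ℤ`-submodule. -/
def compLSub : Submodule ℤ M where
  carrier := {m | pe R i • m = m}
  add_mem' := by
    intro a b ha hb
    simp only [Set.mem_setOf_eq] at *
    rw [smul_add, ha, hb]
  zero_mem' := by simp
  smul_mem' := by
    intro z m hm
    simp only [Set.mem_setOf_eq] at *
    rw [smul_comm, hm]

/-- The `i`-th component of a left module over the product ring. -/
def CompL : Type u := ↥(compLSub R i M)

noncomputable instance : AddCommGroup (CompL R i M) := by unfold CompL; infer_instance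

variable {i M}

/-- Build an element of `CompL`. -/
def CompL.mk (m : M) (h : pe R i • m = m) : CompL R i M := ⟨m, h⟩

/-- The underlying element of `M`. -/
def CompL.val (x : CompL R i M) : M := Subtype.val x

@[simp] lemma CompL.val_mk (m : M) (h : pe R i • m = m) : (CompL.mk R m h).val = m := rfl

lemma CompL.prop (x : CompL R i M) : pe R i • x.val = x.val := x.2

lemma CompL.ext {x y : CompL R i M} (h : x.val = y.val) : x = y := Subtype.ext h

@[simp] lemma CompL.val_add (x y : CompL R i M) : (x + y).val = x.val + y.val := rfl
@[simp] lemma CompL.val_zero : (0 : CompL R i M).val = 0 := rfl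

lemma CompL.mem_smul (r : R i) (m : M) (h : pe R i • m = m) :
    pe R i • (Pi.single i r • m) = Pi.single i r • m := by
  rw [smul_smul, pe_mul, Pi.single_eq_same]

instance : SMul (R i) (CompL R i M) :=
  ⟨fun r x => CompL.mk R (Pi.single i r • x.val) (CompL.mem_smul R r x.val x.2)⟩

@[simp] lemma CompL.val_smul (r : R i) (x : CompL R i M) :
    (r • x).val = Pi.single i r • x.val := rfl

noncomputable instance : Module (R i) (CompL R i M) where
  one_smul x := CompL.ext R (by rw [CompL.val_smul]; exact x.2)
  mul_smul r r' x := CompL.ext R (by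
    simp only [CompL.val_smul]
    rw [← single_mul_single', mul_smul])
  smul_zero r := CompL.ext R (by
    rw [CompL.val_smul, CompL.val_zero, smul_zero])
  smul_add r x y := CompL.ext R (by
    simp only [CompL.val_smul, CompL.val_add]
    exact smul_add _ _ _)
  add_smul r r' x := CompL.ext R (by
    simp only [CompL.val_smul, CompL.val_add]
    rw [Pi.single_add, add_smul])
  zero_smul x := CompL.ext R (by
    rw [CompL.val_smul, CompL.val_zero, Pi.single_zero, zero_smul])

end CompL

section CompR

variable (i : Fin n) (M : Type u) [AddCommGroup M] [Module (∀ j, R j)ᵐᵒᵖ M]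

/-- The `i`-th component of a right module over the product ring, as a `ℤ`-submodule. -/
def compRSub : Submodule ℤ M where
  carrier := {m | MulOpposite.op (pe R i) • m = m}
  add_mem' := by
    intro a b ha hb
    simp only [Set.mem_setOf_eq] at *
    rw [smul_add, ha, hb]
  zero_mem' := by simp
  smul_mem' := by
    intro z m hm
    simp only [Set.mem_setOf_eq] at *
    rw [smul_comm, hm]

/-- The `i`-th component of a right module over the product ring. -/
def CompR : Type u := ↥(compRSub R i M)

noncomputable instance : AddCommGroup (CompR R i M) := by unfold CompR; infer_instance

variable {i M}

/-- Build an element of `CompR`. -/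
def CompR.mk (m : M) (h : MulOpposite.op (pe R i) • m = m) : CompR R i M := ⟨m, h⟩

/-- The underlying element of `M`. -/
def CompR.val (x : CompR R i M) : M := Subtype.val x

@[simp] lemma CompR.val_mk (m : M) (h : MulOpposite.op (pe R i) • m = m) :
    (CompR.mk R m h).val = m := rfl

lemma CompR.prop (x : CompR R i M) :
    MulOpposite.op (pe R i) • x.val = x.val := x.2

lemma CompR.ext {x y : CompR R i M} (h : x.val = y.val) : x = y := Subtype.ext h

@[simp] lemma CompR.val_add (x y : CompR R i M) : (x + y).val = x.val + y.val := rfl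
@[simp] lemma CompR.val_zero : (0 : CompR R i M).val = 0 := rfl

lemma CompR.mem_smul (r : R i) (m : M) :
    MulOpposite.op (pe R i) • (MulOpposite.op (Pi.single i r) • m)
      = MulOpposite.op (Pi.single i r) • m := by
  rw [smul_smul, ← MulOpposite.op_mul, mul_pe, Pi.single_eq_same]

instance : SMul (R i)ᵐᵒᵖ (CompR R i M) :=
  ⟨fun r x => CompR.mk R (MulOpposite.op (Pi.single i r.unop) • x.val)
    (CompR.mem_smul R r.unop x.val)⟩

@[simp] lemma CompR.val_smul (r : (R i)ᵐᵒᵖ) (x : CompR R i M) :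
    (r • x).val = MulOpposite.op (Pi.single i r.unop) • x.val := rfl

noncomputable instance : Module (R i)ᵐᵒᵖ (CompR R i M) where
  one_smul x := CompR.ext R (by rw [CompR.val_smul]; exact x.2)
  mul_smul r r' x := CompR.ext R (by
    simp only [CompR.val_smul]
    rw [smul_smul, ← MulOpposite.op_mul, MulOpposite.unop_mul, single_mul_single'])
  smul_zero r := CompR.ext R (by
    rw [CompR.val_smul, CompR.val_zero, smul_zero])
  smul_add r x y := CompR.ext R (by
    simp only [CompR.val_smul, CompR.val_add]
    exact smul_add _ _ _)
  add_smul r r' x := CompR.ext R (by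
    simp only [CompR.val_smul, CompR.val_add]
    rw [MulOpposite.unop_add, Pi.single_add, MulOpposite.op_add, add_smul])
  zero_smul x := CompR.ext R (by
    rw [CompR.val_smul, CompR.val_zero, MulOpposite.unop_zero, Pi.single_zero,
      MulOpposite.op_zero, zero_smul])

end CompR

section ResL

/-- A left `R i`-module viewed as a left module over the product ring, with the other
factors acting by zero. -/
def ResL (R' : Fin n → Type u) (_i : Fin n) (N : Type u) : Type u := N

variable (i : Fin n) (N : Type u) [AddCommGroup N] [Module (R i) N]

instance : AddCommGroup (ResL R i N) := ‹AddCommGroup N›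

noncomputable instance : Module (∀ j, R j) (ResL R i N) :=
  Module.compHom N (Pi.evalRingHom R i)

variable {i N}

/-- Identity function into `ResL`. -/
def ResL.mk (x : N) : ResL R i N := x

/-- Identity function out of `ResL`. -/
def ResL.val (x : ResL R i N) : N := x

@[simp] lemma ResL.val_mk (x : N) : (ResL.mk R (i := i) x).val = x := rfl
@[simp] lemma ResL.mk_val (x : ResL R i N) : ResL.mk R x.val = x := rfl
@[simp] lemma ResL.val_add (x y : ResL R i N) : (x + y).val = x.val + y.val := rfl
@[simp] lemma ResL.val_zero : (0 : ResL R i N).val = 0 := rfl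

lemma ResL.smul_def (s : ∀ j, R j) (x : ResL R i N) :
    s • x = ResL.mk R (s i • x.val) := rfl

end ResL

section ResR

/-- A right `R i`-module viewed as a right module over the product ring. -/
def ResR (R' : Fin n → Type u) (_i : Fin n) (N : Type u) : Type u := N

variable (i : Fin n) (N : Type u) [AddCommGroup N] [Module (R i)ᵐᵒᵖ N]

instance : AddCommGroup (ResR R i N) := ‹AddCommGroup N›

noncomputable instance : Module (∀ j, R j)ᵐᵒᵖ (ResR R i N) :=
  Module.compHom N (RingHom.op (Pi.evalRingHom R i))

variable {i N}

/-- Identity function into `ResR`. -/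
def ResR.mk (x : N) : ResR R i N := x

/-- Identity function out of `ResR`. -/
def ResR.val (x : ResR R i N) : N := x

@[simp] lemma ResR.val_mk (x : N) : (ResR.mk R (i := i) x).val = x := rfl
@[simp] lemma ResR.mk_val (x : ResR R i N) : ResR.mk R x.val = x := rfl
@[simp] lemma ResR.val_add (x y : ResR R i N) : (x + y).val = x.val + y.val := rfl
@[simp] lemma ResR.val_zero : (0 : ResR R i N).val = 0 := rfl

lemma ResR.smul_def (s : (∀ j, R j)ᵐᵒᵖ) (x : ResR R i N) :
    s • x = ResR.mk R (MulOpposite.op (s.unop i) • x.val) := rfl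

end ResR

end ProdRing


/-! ### Functoriality of components and restrictions -/

section Functoriality

variable {n : ℕ} (R : Fin n → Type u) [∀ i, Ring (R i)] (i : Fin n)

lemma pe_smul_mem {M : Type u} [AddCommGroup M] [Module (∀ j, R j) M] (m : M) :
    pe R i • (pe R i • m) = pe R i • m := by
  rw [smul_smul, pe_mul_pe]

lemma pe_op_smul_mem {M : Type u} [AddCommGroup M] [Module (∀ j, R j)ᵐᵒᵖ M] (m : M) :
    MulOpposite.op (pe R i) • (MulOpposite.op (pe R i) • m)
      = MulOpposite.op (pe R i) • m := by
  rw [smul_smul, ← MulOpposite.op_mul, pe_mul_pe]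

section Maps

variable {M M' M'' : Type u} [AddCommGroup M] [Module (∀ j, R j) M]
  [AddCommGroup M'] [Module (∀ j, R j) M'] [AddCommGroup M''] [Module (∀ j, R j) M'']

/-- Functoriality of `CompL`. -/
noncomputable def CompL.map (f : M →ₗ[∀ j, R j] M') :
    CompL R i M →ₗ[R i] CompL R i M' where
  toFun x := CompL.mk R (f x.val) (by rw [← map_smul, CompL.prop R x])
  map_add' x y := CompL.ext R (by simp [map_add])
  map_smul' r x := CompL.ext R (by simp)

@[simp] lemma CompL.map_val (f : M →ₗ[∀ j, R j] M') (x : CompL R i M) :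
    (CompL.map R i f x).val = f x.val := rfl

lemma CompL.map_injective (f : M →ₗ[∀ j, R j] M') (hf : Function.Injective f) :
    Function.Injective (CompL.map R i f) := fun x y h =>
  CompL.ext R (hf (congrArg (CompL.val R) h))

lemma CompL.map_surjective (f : M →ₗ[∀ j, R j] M') (hf : Function.Surjective f) :
    Function.Surjective (CompL.map R i f) := by
  intro y
  obtain ⟨x, hx⟩ := hf y.val
  refine ⟨CompL.mk R (pe R i • x) (pe_smul_mem R i x), CompL.ext R ?_⟩
  show f (pe R i • x) = y.val
  rw [map_smul, hx, CompL.prop R y]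

lemma CompL.map_exact (f : M →ₗ[∀ j, R j] M') (g : M' →ₗ[∀ j, R j] M'')
    (h : Function.Exact f g) :
    Function.Exact (CompL.map R i f) (CompL.map R i g) := by
  intro y
  constructor
  · intro hy
    have hy' : g y.val = 0 := congrArg (CompL.val R) hy
    obtain ⟨x, hx⟩ := (h y.val).mp hy'
    refine ⟨CompL.mk R (pe R i • x) (pe_smul_mem R i x), CompL.ext R ?_⟩
    show f (pe R i • x) = y.val
    rw [map_smul, hx, CompL.prop R y]
  · rintro ⟨x, rfl⟩
    exact CompL.ext R (h.apply_apply_eq_zero x.val)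

/-- Functoriality of `CompL` on equivalences. -/
noncomputable def CompL.congr (e : M ≃ₗ[∀ j, R j] M') :
    CompL R i M ≃ₗ[R i] CompL R i M' :=
  LinearEquiv.ofLinear (CompL.map R i e.toLinearMap) (CompL.map R i e.symm.toLinearMap)
    (LinearMap.ext fun x => CompL.ext R (by simp))
    (LinearMap.ext fun x => CompL.ext R (by simp))

@[simp] lemma CompL.congr_val (e : M ≃ₗ[∀ j, R j] M') (x : CompL R i M) :
    (CompL.congr R i e x).val = e x.val := rfl

end Maps

section MapsR

variable {M M' : Type u} [AddCommGroup M] [Module (∀ j, R j)ᵐᵒᵖ M]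
  [AddCommGroup M'] [Module (∀ j, R j)ᵐᵒᵖ M']

/-- Functoriality of `CompR`. -/
noncomputable def CompR.map (f : M →ₗ[(∀ j, R j)ᵐᵒᵖ] M') :
    CompR R i M →ₗ[(R i)ᵐᵒᵖ] CompR R i M' where
  toFun x := CompR.mk R (f x.val) (by rw [← map_smul, CompR.prop R x])
  map_add' x y := CompR.ext R (by simp [map_add])
  map_smul' r x := CompR.ext R (by simp)

@[simp] lemma CompR.map_val (f : M →ₗ[(∀ j, R j)ᵐᵒᵖ] M') (x : CompR R i M) :
    (CompR.map R i f x).val = f x.val := rfl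

lemma CompR.map_injective (f : M →ₗ[(∀ j, R j)ᵐᵒᵖ] M') (hf : Function.Injective f) :
    Function.Injective (CompR.map R i f) := fun x y h =>
  CompR.ext R (hf (congrArg (CompR.val R) h))

end MapsR

section ResMaps

variable {N N' N'' : Type u} [AddCommGroup N] [Module (R i) N]
  [AddCommGroup N'] [Module (R i) N'] [AddCommGroup N''] [Module (R i) N'']

/-- Functoriality of `ResL`. -/
noncomputable def ResL.map (f : N →ₗ[R i] N') : ResL R i N →ₗ[∀ j, R j] ResL R i N' where
  toFun x := ResL.mk R (f x.val)
  map_add' x y := congrArg (ResL.mk R) (map_add f x.val y.val)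
  map_smul' s x := congrArg (ResL.mk R) (map_smul f (s i) x.val)

@[simp] lemma ResL.map_val (f : N →ₗ[R i] N') (x : ResL R i N) :
    (ResL.map R i f x).val = f x.val := rfl

lemma ResL.map_injective (f : N →ₗ[R i] N') (hf : Function.Injective f) :
    Function.Injective (ResL.map R i f) := fun x y h => hf h

lemma ResL.map_surjective (f : N →ₗ[R i] N') (hf : Function.Surjective f) :
    Function.Surjective (ResL.map R i f) := fun y => hf y

lemma ResL.map_exact (f : N →ₗ[R i] N') (g : N' →ₗ[R i] N'')
    (h : Function.Exact f g) :
    Function.Exact (ResL.map R i f) (ResL.map R i g) := h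

/-- Functoriality of `ResL` on equivalences. -/
noncomputable def ResL.congr (e : N ≃ₗ[R i] N') : ResL R i N ≃ₗ[∀ j, R j] ResL R i N' :=
  LinearEquiv.ofLinear (ResL.map R i e.toLinearMap) (ResL.map R i e.symm.toLinearMap)
    (LinearMap.ext fun x => by
      show ResL.mk R (e (e.symm x.val)) = x
      simp)
    (LinearMap.ext fun x => by
      show ResL.mk R (e.symm (e x.val)) = x
      simp)

@[simp] lemma ResL.congr_val (e : N ≃ₗ[R i] N') (x : ResL R i N) :
    (ResL.congr R i e x).val = e x.val := rfl

/-- `CompL` of `ResL` recovers the original module. -/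
noncomputable def CompL.resEquiv : CompL R i (ResL R i N) ≃ₗ[R i] N where
  toFun x := ResL.val R x.val
  invFun y := CompL.mk R (ResL.mk R y) (by
    show pe R i • ResL.mk R y = ResL.mk R y
    rw [ResL.smul_def]
    show ResL.mk R (Pi.single i (1 : R i) i • y) = _
    rw [Pi.single_eq_same, one_smul])
  map_add' x y := rfl
  map_smul' r x := by
    show ResL.val R (CompL.val R (r • x)) = r • ResL.val R x.val
    rw [CompL.val_smul]
    show Pi.single i r i • ResL.val R x.val = _
    rw [Pi.single_eq_same]
  left_inv x := CompL.ext R rfl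
  right_inv y := rfl

end ResMaps

section ResMapsR

variable {N N' : Type u} [AddCommGroup N] [Module (R i)ᵐᵒᵖ N]
  [AddCommGroup N'] [Module (R i)ᵐᵒᵖ N']

/-- Functoriality of `ResR`. -/
noncomputable def ResR.map (f : N →ₗ[(R i)ᵐᵒᵖ] N') :
    ResR R i N →ₗ[(∀ j, R j)ᵐᵒᵖ] ResR R i N' where
  toFun x := ResR.mk R (f x.val)
  map_add' x y := congrArg (ResR.mk R) (map_add f x.val y.val)
  map_smul' s x := congrArg (ResR.mk R) (map_smul f (MulOpposite.op (s.unop i)) x.val)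

@[simp] lemma ResR.map_val (f : N →ₗ[(R i)ᵐᵒᵖ] N') (x : ResR R i N) :
    (ResR.map R i f x).val = f x.val := rfl

lemma ResR.map_injective (f : N →ₗ[(R i)ᵐᵒᵖ] N') (hf : Function.Injective f) :
    Function.Injective (ResR.map R i f) := fun x y h => hf h

end ResMapsR

end Functoriality

/-! ### The decomposition of a module over a product ring -/

section Decomposition

variable {n : ℕ} (R : Fin n → Type u) [∀ i, Ring (R i)]
variable (M : Type u) [AddCommGroup M] [Module (∀ j, R j) M]

/-- The canonical decomposition of a module over a product ring into its components. -/
noncomputable def decompEquiv : M ≃ₗ[∀ j, R j] ∀ i, ResL R i (CompL R i M) where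
  toFun m := fun i => ResL.mk R (CompL.mk R (pe R i • m) (pe_smul_mem R i m))
  invFun x := ∑ i, CompL.val R (ResL.val R (x i))
  map_add' m m' := funext fun i => Subtype.ext (smul_add (pe R i) m m')
  map_smul' s m := by
    funext i
    show ResL.mk R (CompL.mk R (pe R i • s • m) _) = (s • _ : ∀ i, ResL R i (CompL R i M)) i
    show ResL.mk R (i := i) (CompL.mk R (pe R i • s • m) _)
        = s • ResL.mk R (i := i) (CompL.mk R (pe R i • m) (pe_smul_mem R i m))
    rw [ResL.smul_def]
    refine congrArg (ResL.mk R) (CompL.ext R ?_)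
    show pe R i • s • m = Pi.single i (s i) • pe R i • m
    rw [smul_smul, smul_smul, pe_mul, mul_pe, Pi.single_eq_same]
  left_inv m := by
    show ∑ i, pe R i • m = m
    rw [← Finset.sum_smul, sum_pe, one_smul]
  right_inv x := by
    funext i
    refine congrArg (ResL.mk R) (CompL.ext R ?_)
    show pe R i • ∑ j, CompL.val R (ResL.val R (x j)) = CompL.val R (ResL.val R (x i))
    rw [Finset.smul_sum]
    rw [Finset.sum_eq_single i]
    · exact CompL.prop R (ResL.val R (x i))
    · intro j _ hj
      have h2 := CompL.prop R (ResL.val R (x j))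
      rw [← h2, smul_smul, pe_orth R (Ne.symm hj), zero_smul]
    · intro h; exact absurd (Finset.mem_univ i) h

@[simp] lemma decompEquiv_apply_val (m : M) (i : Fin n) :
    CompL.val R (ResL.val R (decompEquiv R M m i)) = pe R i • m := rfl

end Decomposition


/-! ### Tensor isomorphisms -/

section Iso1

open MulOpposite

variable {n : ℕ} (R : Fin n → Type u) [∀ i, Ring (R i)] (i : Fin n)
variable (A : Type u) [AddCommGroup A] [Module (∀ j, R j)ᵐᵒᵖ A]
variable (N : Type u) [AddCommGroup N] [Module (R i) N]

lemma pe_smul_resL (b : ResL R i N) : pe R i • b = b := by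
  rw [ResL.smul_def, pe, Pi.single_eq_same, one_smul, ResL.mk_val]

lemma single_smul_resL (r : R i) (x : N) :
    (Pi.single i r : ∀ j, R j) • (ResL.mk R x : ResL R i N) = ResL.mk R (r • x) := by
  rw [ResL.smul_def, ResL.val_mk, Pi.single_eq_same]

/-- Forward map: `A ⊗_S (ResL N) → (CompR A) ⊗_{R i} N`. -/
noncomputable def iso1Fwd :
    RTensor (∀ j, R j) A (ResL R i N) →ₗ[ℤ] RTensor (R i) (CompR R i A) N :=
  RTensor.lift
    (fun a b => RTensor.tmul (R i)
      (CompR.mk R (op (pe R i) • a) (pe_op_smul_mem R i a)) (ResL.val R b))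
    (fun a a' b => by
      rw [show CompR.mk R (op (pe R i) • (a + a')) (pe_op_smul_mem R i (a + a'))
          = CompR.mk R (op (pe R i) • a) (pe_op_smul_mem R i a)
            + CompR.mk R (op (pe R i) • a') (pe_op_smul_mem R i a')
          from CompR.ext R (by simp [smul_add]), RTensor.add_tmul])
    (fun a b b' => by rw [ResL.val_add, RTensor.tmul_add])
    (fun s a b => by
      have h1 : CompR.mk R (op (pe R i) • (op s • a)) (pe_op_smul_mem R i _)
          = op (s i) • CompR.mk R (op (pe R i) • a) (pe_op_smul_mem R i a) :=
        CompR.ext R (by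
          simp only [CompR.val_smul, CompR.val_mk, MulOpposite.unop_op]
          rw [smul_smul, smul_smul, ← MulOpposite.op_mul, ← MulOpposite.op_mul,
            mul_pe, pe_mul, Pi.single_eq_same])
      rw [h1, RTensor.tmul_rel]
      rfl)

/-- Backward map: `(CompR A) ⊗_{R i} N → A ⊗_S (ResL N)`. -/
noncomputable def iso1Bwd :
    RTensor (R i) (CompR R i A) N →ₗ[ℤ] RTensor (∀ j, R j) A (ResL R i N) :=
  RTensor.lift
    (fun x nn => RTensor.tmul (∀ j, R j) (CompR.val R x) (ResL.mk R nn : ResL R i N))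
    (fun x x' nn => by rw [CompR.val_add, RTensor.add_tmul])
    (fun x nn nn' => by
      rw [show (ResL.mk R (nn + nn') : ResL R i N) = ResL.mk R nn + ResL.mk R nn'
        from rfl, RTensor.tmul_add])
    (fun r x nn => by
      rw [CompR.val_smul, RTensor.tmul_rel, single_smul_resL]
      rfl)

/-- The tensor product over `S` against a restricted module is the tensor product of
the component over `R i`. -/
noncomputable def iso1 :
    RTensor (∀ j, R j) A (ResL R i N) ≃ₗ[ℤ] RTensor (R i) (CompR R i A) N :=
  LinearEquiv.ofLinear (iso1Fwd R i A N) (iso1Bwd R i A N)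
    (RTensor.hom_ext fun x nn => by
      show iso1Fwd R i A N (RTensor.tmul _ (CompR.val R x) (ResL.mk R nn)) = _
      show RTensor.tmul (R i) (CompR.mk R (op (pe R i) • CompR.val R x) _)
        (ResL.val R (ResL.mk R nn)) = RTensor.tmul (R i) x nn
      rw [ResL.val_mk]
      exact congrArg (fun y => RTensor.tmul (R i) y nn) (CompR.ext R (CompR.prop R x)))
    (RTensor.hom_ext fun a b => by
      show iso1Bwd R i A N (RTensor.tmul (R i)
        (CompR.mk R (op (pe R i) • a) (pe_op_smul_mem R i a)) (ResL.val R b)) = _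
      show RTensor.tmul (∀ j, R j) (op (pe R i) • a) (ResL.mk R (ResL.val R b)) = _
      rw [ResL.mk_val, RTensor.tmul_rel, pe_smul_resL]
      rfl)

@[simp] lemma iso1_tmul (a : A) (b : ResL R i N) :
    iso1 R i A N (RTensor.tmul _ a b)
      = RTensor.tmul (R i) (CompR.mk R (op (pe R i) • a) (pe_op_smul_mem R i a))
          (ResL.val R b) := rfl

@[simp] lemma iso1_symm_tmul (x : CompR R i A) (nn : N) :
    (iso1 R i A N).symm (RTensor.tmul (R i) x nn)
      = RTensor.tmul (∀ j, R j) (CompR.val R x) (ResL.mk R nn : ResL R i N) := rfl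

variable {A N}

/-- Naturality of `iso1` in the right-module slot. -/
lemma iso1_comm_lmap {A' : Type u} [AddCommGroup A'] [Module (∀ j, R j)ᵐᵒᵖ A']
    (g : A →ₗ[(∀ j, R j)ᵐᵒᵖ] A') :
    (iso1 R i A' N).toLinearMap ∘ₗ RTensor.lmap (∀ j, R j) g (ResL R i N)
      = RTensor.lmap (R i) (CompR.map R i g) N ∘ₗ (iso1 R i A N).toLinearMap :=
  RTensor.hom_ext fun a b => by
    simp only [LinearMap.comp_apply, LinearEquiv.coe_coe, RTensor.lmap_tmul, iso1_tmul]
    exact congrArg (fun y => RTensor.tmul (R i) y (ResL.val R b))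
      (CompR.ext R (by simp))

/-- Naturality of `iso1` in the left-module slot. -/
lemma iso1_comm_map {N' : Type u} [AddCommGroup N'] [Module (R i) N']
    (f : N →ₗ[R i] N') :
    (iso1 R i A N').toLinearMap ∘ₗ RTensor.map (∀ j, R j) A (ResL.map R i f)
      = RTensor.map (R i) (CompR R i A) f ∘ₗ (iso1 R i A N).toLinearMap :=
  RTensor.hom_ext fun a b => by
    simp only [LinearMap.comp_apply, LinearEquiv.coe_coe, RTensor.map_tmul, iso1_tmul]
    rfl

end Iso1

section Iso2

open MulOpposite

variable {n : ℕ} (R : Fin n → Type u) [∀ i, Ring (R i)] (i : Fin n)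
variable (A : Type u) [AddCommGroup A] [Module (R i)ᵐᵒᵖ A]
variable (B : Type u) [AddCommGroup B] [Module (∀ j, R j) B]

lemma op_single_smul_resR (r : R i) (a : A) :
    op (Pi.single i r : ∀ j, R j) • (ResR.mk R a : ResR R i A) = ResR.mk R (op r • a) := by
  rw [ResR.smul_def, ResR.val_mk, MulOpposite.unop_op, Pi.single_eq_same]

lemma op_pe_smul_resR (a : ResR R i A) : op (pe R i) • a = a := by
  rw [ResR.smul_def, MulOpposite.unop_op, pe, Pi.single_eq_same]
  show ResR.mk R ((1 : (R i)ᵐᵒᵖ) • ResR.val R a) = a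
  rw [one_smul, ResR.mk_val]

/-- Forward map: `A ⊗_{R i} (CompL B) → (ResR A) ⊗_S B`. -/
noncomputable def iso2Fwd :
    RTensor (R i) A (CompL R i B) →ₗ[ℤ] RTensor (∀ j, R j) (ResR R i A) B :=
  RTensor.lift
    (fun a x => RTensor.tmul (∀ j, R j) (ResR.mk R a : ResR R i A) (CompL.val R x))
    (fun a a' x => by
      rw [show (ResR.mk R (a + a') : ResR R i A) = ResR.mk R a + ResR.mk R a' from rfl,
        RTensor.add_tmul])
    (fun a x x' => by rw [CompL.val_add, RTensor.tmul_add])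
    (fun r a x => by
      rw [← op_single_smul_resR, RTensor.tmul_rel]
      rfl)

/-- Backward map: `(ResR A) ⊗_S B → A ⊗_{R i} (CompL B)`. -/
noncomputable def iso2Bwd :
    RTensor (∀ j, R j) (ResR R i A) B →ₗ[ℤ] RTensor (R i) A (CompL R i B) :=
  RTensor.lift
    (fun a b => RTensor.tmul (R i) (ResR.val R a)
      (CompL.mk R (pe R i • b) (pe_smul_mem R i b)))
    (fun a a' b => by rw [ResR.val_add, RTensor.add_tmul])
    (fun a b b' => by
      rw [show CompL.mk R (pe R i • (b + b')) (pe_smul_mem R i (b + b'))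
          = CompL.mk R (pe R i • b) (pe_smul_mem R i b)
            + CompL.mk R (pe R i • b') (pe_smul_mem R i b')
          from CompL.ext R (by simp [smul_add]), RTensor.tmul_add])
    (fun s a b => by
      have h0 : ResR.val R (op s • a) = op (s i) • ResR.val R a := rfl
      have h1 : (s i) • CompL.mk R (pe R i • b) (pe_smul_mem R i b)
          = CompL.mk R (pe R i • s • b) (pe_smul_mem R i (s • b)) :=
        CompL.ext R (by
          simp only [CompL.val_smul, CompL.val_mk]
          rw [smul_smul, smul_smul, mul_pe, pe_mul, Pi.single_eq_same])
      rw [h0, RTensor.tmul_rel, h1])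

/-- The tensor product over `R i` against a component module is the tensor product
over the product ring against the restricted module. -/
noncomputable def iso2 :
    RTensor (R i) A (CompL R i B) ≃ₗ[ℤ] RTensor (∀ j, R j) (ResR R i A) B :=
  LinearEquiv.ofLinear (iso2Fwd R i A B) (iso2Bwd R i A B)
    (RTensor.hom_ext fun a b => by
      show iso2Fwd R i A B (RTensor.tmul (R i) (ResR.val R a)
        (CompL.mk R (pe R i • b) (pe_smul_mem R i b))) = _
      show RTensor.tmul (∀ j, R j) (ResR.mk R (ResR.val R a)) (CompL.val R
        (CompL.mk R (pe R i • b) (pe_smul_mem R i b))) = RTensor.tmul _ a b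
      rw [ResR.mk_val, CompL.val_mk, ← RTensor.tmul_rel, op_pe_smul_resR])
    (RTensor.hom_ext fun a x => by
      show iso2Bwd R i A B (RTensor.tmul (∀ j, R j) (ResR.mk R a : ResR R i A)
        (CompL.val R x)) = _
      show RTensor.tmul (R i) (ResR.val R (ResR.mk R a))
        (CompL.mk R (pe R i • CompL.val R x) (pe_smul_mem R i _)) = RTensor.tmul _ a x
      rw [ResR.val_mk]
      exact congrArg (RTensor.tmul (R i) a) (CompL.ext R (CompL.prop R x)))

@[simp] lemma iso2_tmul (a : A) (x : CompL R i B) :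
    iso2 R i A B (RTensor.tmul (R i) a x)
      = RTensor.tmul (∀ j, R j) (ResR.mk R a : ResR R i A) (CompL.val R x) := rfl

variable {A B}

/-- Naturality of `iso2` in the right-module slot. -/
lemma iso2_comm_lmap {A' : Type u} [AddCommGroup A'] [Module (R i)ᵐᵒᵖ A']
    (g : A →ₗ[(R i)ᵐᵒᵖ] A') :
    (iso2 R i A' B).toLinearMap ∘ₗ RTensor.lmap (R i) g (CompL R i B)
      = RTensor.lmap (∀ j, R j) (ResR.map R i g) B ∘ₗ (iso2 R i A B).toLinearMap :=
  RTensor.hom_ext fun a x => by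
    simp only [LinearMap.comp_apply, LinearEquiv.coe_coe, RTensor.lmap_tmul, iso2_tmul]
    rfl

/-- Naturality of `iso2` in the left-module slot. -/
lemma iso2_comm_map {B' : Type u} [AddCommGroup B'] [Module (∀ j, R j) B']
    (f : B →ₗ[∀ j, R j] B') :
    (iso2 R i A B').toLinearMap ∘ₗ RTensor.map (R i) A (CompL.map R i f)
      = RTensor.map (∀ j, R j) (ResR R i A) f ∘ₗ (iso2 R i A B).toLinearMap :=
  RTensor.hom_ext fun a x => by
    simp only [LinearMap.comp_apply, LinearEquiv.coe_coe, RTensor.map_tmul, iso2_tmul]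
    rfl

end Iso2

section Iso3

variable {n : ℕ} (S : Type u) [Ring S]
variable (A : Type u) [AddCommGroup A] [Module Sᵐᵒᵖ A]
variable (P : Fin n → Type u) [∀ i, AddCommGroup (P i)] [∀ i, Module S (P i)]

/-- Tensoring with a finite product of modules. -/
noncomputable def iso3Fwd :
    RTensor S A (∀ i, P i) →ₗ[ℤ] ∀ i, RTensor S A (P i) :=
  LinearMap.pi (fun i => RTensor.map S A ((LinearMap.proj i : (∀ k, P k) →ₗ[S] P i)))

noncomputable def iso3Bwd :
    (∀ i, RTensor S A (P i)) →ₗ[ℤ] RTensor S A (∀ i, P i) :=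
  ∑ i, RTensor.map S A (LinearMap.single S P i)
    ∘ₗ (LinearMap.proj i : (∀ k, RTensor S A (P k)) →ₗ[ℤ] RTensor S A (P i))

lemma iso3_fwd_bwd : iso3Fwd S A P ∘ₗ iso3Bwd S A P = LinearMap.id := by
  refine LinearMap.ext fun x => ?_
  funext j
  show iso3Fwd S A P (iso3Bwd S A P x) j = x j
  have : iso3Bwd S A P x = ∑ i, RTensor.map S A (LinearMap.single S P i) (x i) := by
    rw [iso3Bwd]
    simp [LinearMap.sum_apply]
    rfl
  rw [this]
  show RTensor.map S A (LinearMap.proj j) (∑ i, RTensor.map S A (LinearMap.single S P i) (x i)) = x j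
  rw [map_sum]
  rw [Finset.sum_eq_single j]
  · rw [← LinearMap.comp_apply, ← RTensor.map_comp, LinearMap.proj_comp_single_same,
      RTensor.map_id, LinearMap.id_apply]
  · intro i _ hij
    rw [← LinearMap.comp_apply, ← RTensor.map_comp, LinearMap.proj_comp_single_ne S P j i
      (Ne.symm hij), RTensor.map_zero, LinearMap.zero_apply]
  · intro h; exact absurd (Finset.mem_univ j) h

lemma iso3_bwd_fwd : iso3Bwd S A P ∘ₗ iso3Fwd S A P = LinearMap.id :=
  RTensor.hom_ext fun a b => by
    show iso3Bwd S A P (iso3Fwd S A P (RTensor.tmul S a b)) = RTensor.tmul S a b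
    have h1 : iso3Fwd S A P (RTensor.tmul S a b) = fun i => RTensor.tmul S a (b i) := by
      funext i
      show RTensor.map S A (LinearMap.proj i) (RTensor.tmul S a b) = _
      rw [RTensor.map_tmul]
      rfl
    rw [h1, iso3Bwd]
    rw [LinearMap.sum_apply]
    have h2 : ∀ i, (RTensor.map S A (LinearMap.single S P i) ∘ₗ
        (LinearMap.proj i : (∀ k, RTensor S A (P k)) →ₗ[ℤ] _))
          (fun k => RTensor.tmul S a (b k))
        = RTensor.tmul S a (Pi.single i (b i)) := by
      intro i
      show RTensor.map S A (LinearMap.single S P i) (RTensor.tmul S a (b i)) = _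
      rw [RTensor.map_tmul]
      rfl
    refine (Finset.sum_congr rfl (fun i _ => h2 i)).trans ?_
    rw [← RTensor.tmul_sum, Finset.univ_sum_single]

/-- Tensor products commute with finite products in the second variable. -/
noncomputable def iso3 : RTensor S A (∀ i, P i) ≃ₗ[ℤ] ∀ i, RTensor S A (P i) :=
  LinearEquiv.ofLinear (iso3Fwd S A P) (iso3Bwd S A P) (iso3_fwd_bwd S A P) (iso3_bwd_fwd S A P)

lemma iso3_apply (z : RTensor S A (∀ i, P i)) (i : Fin n) :
    iso3 S A P z i = RTensor.map S A (LinearMap.proj i) z := rfl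

lemma iso3_tmul_apply (a : A) (b : ∀ i, P i) (i : Fin n) :
    iso3 S A P (RTensor.tmul S a b) i = RTensor.tmul S a (b i) := by
  show RTensor.map S A (LinearMap.proj i) (RTensor.tmul S a b) = _
  rw [RTensor.map_tmul]
  rfl

variable {A P}

/-- Naturality of `iso3` in the right-module slot. -/
lemma iso3_comm_lmap {A' : Type u} [AddCommGroup A'] [Module Sᵐᵒᵖ A']
    (g : A →ₗ[Sᵐᵒᵖ] A') :
    (iso3 S A' P).toLinearMap ∘ₗ RTensor.lmap S g (∀ i, P i)
      = LinearMap.pi (fun i => RTensor.lmap S g (P i) ∘ₗ LinearMap.proj i)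
          ∘ₗ (iso3 S A P).toLinearMap := by
  apply RTensor.hom_ext fun a b => ?_
  funext i
  show RTensor.map S A' (LinearMap.proj i) (RTensor.lmap S g _ (RTensor.tmul S a b))
    = RTensor.lmap S g (P i) (RTensor.map S A (LinearMap.proj i) (RTensor.tmul S a b))
  rw [RTensor.lmap_tmul, RTensor.map_tmul, RTensor.map_tmul, RTensor.lmap_tmul]

/-- Naturality of `iso3` in the left-module slot. -/
lemma iso3_comm_map {P' : Fin n → Type u} [∀ i, AddCommGroup (P' i)]
    [∀ i, Module S (P' i)] (f : ∀ i, P i →ₗ[S] P' i) :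
    (iso3 S A P').toLinearMap ∘ₗ RTensor.map S A (LinearMap.pi (fun i => f i ∘ₗ LinearMap.proj i))
      = LinearMap.pi (fun i => RTensor.map S A (f i) ∘ₗ LinearMap.proj i)
          ∘ₗ (iso3 S A P).toLinearMap := by
  apply RTensor.hom_ext fun a b => ?_
  funext i
  show RTensor.map S A (LinearMap.proj i)
      (RTensor.map S A (LinearMap.pi fun k => f k ∘ₗ LinearMap.proj k) (RTensor.tmul S a b))
    = RTensor.map S A (f i) (RTensor.map S A (LinearMap.proj i) (RTensor.tmul S a b))
  rw [RTensor.map_tmul, RTensor.map_tmul, RTensor.map_tmul, RTensor.map_tmul]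
  rfl

end Iso3


/-! ### Transfer of injectivity along conjugation -/

section Conj

lemma injective_of_conj {M M' N N' : Type*}
    [AddCommGroup M] [AddCommGroup M'] [AddCommGroup N] [AddCommGroup N']
    (e : M ≃ₗ[ℤ] M') (e' : N ≃ₗ[ℤ] N') {f : M →ₗ[ℤ] N} {g : M' →ₗ[ℤ] N'}
    (h : e'.toLinearMap ∘ₗ f = g ∘ₗ e.toLinearMap)
    (hf : Function.Injective g) : Function.Injective f := by
  intro x y hxy
  have h1 := LinearMap.congr_fun h x
  have h2 := LinearMap.congr_fun h y
  simp only [LinearMap.comp_apply, LinearEquiv.coe_coe] at h1 h2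
  have : g (e x) = g (e y) := by rw [← h1, ← h2, hxy]
  exact e.injective (hf this)

lemma exact_of_conj {M₁ M₂ M₃ N₁ N₂ N₃ : Type*}
    [AddCommGroup M₁] [AddCommGroup M₂] [AddCommGroup M₃]
    [AddCommGroup N₁] [AddCommGroup N₂] [AddCommGroup N₃]
    (e₁ : M₁ ≃ₗ[ℤ] N₁) (e₂ : M₂ ≃ₗ[ℤ] N₂) (e₃ : M₃ ≃ₗ[ℤ] N₃)
    {f : M₁ →ₗ[ℤ] M₂} {f' : M₂ →ₗ[ℤ] M₃} {g : N₁ →ₗ[ℤ] N₂} {g' : N₂ →ₗ[ℤ] N₃}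
    (h : e₂.toLinearMap ∘ₗ f = g ∘ₗ e₁.toLinearMap)
    (h' : e₃.toLinearMap ∘ₗ f' = g' ∘ₗ e₂.toLinearMap)
    (hex : Function.Exact g g') : Function.Exact f f' :=
  (Function.Exact.iff_of_ladder_linearEquiv h.symm h'.symm).mp hex

end Conj

/-! ### Transfer of flatness -/

section FlatTransfer

open MulOpposite

variable {n : ℕ} (R : Fin n → Type u) [∀ i, Ring (R i)] (i : Fin n)

lemma flat_res (N : Type u) [AddCommGroup N] [Module (R i) N]
    (hN : FlatModule (R i) N) : FlatModule (∀ j, R j) (ResL R i N) := by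
  intro A A' _ _ _ _ g hg
  have hinj := hN (CompR R i A) (CompR R i A') (CompR.map R i g)
    (CompR.map_injective R i g hg)
  exact injective_of_conj (iso1 R i A N) (iso1 R i A' N) (iso1_comm_lmap R i g) hinj

lemma flat_comp (B : Type u) [AddCommGroup B] [Module (∀ j, R j) B]
    (hB : FlatModule (∀ j, R j) B) : FlatModule (R i) (CompL R i B) := by
  intro A A' _ _ _ _ g hg
  have hinj := hB (ResR R i A) (ResR R i A') (ResR.map R i g)
    (ResR.map_injective R i g hg)
  exact injective_of_conj (iso2 R i A B) (iso2 R i A' B) (iso2_comm_lmap R i g) hinj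

lemma flat_pi (P : Fin n → Type u) [∀ i, AddCommGroup (P i)]
    [∀ i, Module (∀ j, R j) (P i)]
    (hP : ∀ i, FlatModule (∀ j, R j) (P i)) : FlatModule (∀ j, R j) (∀ i, P i) := by
  intro A A' _ _ _ _ g hg
  refine injective_of_conj (iso3 (∀ j, R j) A P) (iso3 (∀ j, R j) A' P)
    (iso3_comm_lmap (∀ j, R j) g) ?_
  intro x y hxy
  funext k
  exact (hP k A A' g hg) (congrFun hxy k)

end FlatTransfer

/-! ### Transfer of injectivity of modules -/

section InjTransfer

open MulOpposite

variable {n : ℕ} (R : Fin n → Type u) [∀ i, Ring (R i)] (i : Fin n)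

lemma inj_res (I : Type u) [AddCommGroup I] [Module (R i)ᵐᵒᵖ I]
    (hI : Module.Injective (R i)ᵐᵒᵖ I) :
    Module.Injective (∀ j, R j)ᵐᵒᵖ (ResR R i I) := by
  constructor
  intro X Y _ _ _ _ f hf g
  -- restrict g to the i-th component
  let g' : CompR R i X →ₗ[(R i)ᵐᵒᵖ] I :=
    { toFun := fun x => ResR.val R (g (CompR.val R x))
      map_add' := fun x y => by simp [map_add]
      map_smul' := fun r x => by
        show ResR.val R (g (op (Pi.single i r.unop) • CompR.val R x)) = _
        rw [map_smul]
        show ResR.val R (ResR.mk R (op ((Pi.single i r.unop : ∀ j, R j) i)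
          • ResR.val R (g (CompR.val R x)))) = _
        rw [ResR.val_mk, Pi.single_eq_same]
        rfl }
  obtain ⟨h, hh⟩ := hI.out (CompR.map R i f) (CompR.map_injective R i f hf) g'
  let H : Y →ₗ[(∀ j, R j)ᵐᵒᵖ] ResR R i I :=
    { toFun := fun y => ResR.mk R (h (CompR.mk R (op (pe R i) • y)
        (pe_op_smul_mem R i y)))
      map_add' := fun x y => by
        refine congrArg (ResR.mk R) ?_
        rw [show CompR.mk R (op (pe R i) • (x + y)) (pe_op_smul_mem R i (x + y))
          = CompR.mk R (op (pe R i) • x) (pe_op_smul_mem R i x)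
            + CompR.mk R (op (pe R i) • y) (pe_op_smul_mem R i y)
          from CompR.ext R (by simp [smul_add]), map_add]
        rfl
      map_smul' := fun s y => by
        have h1 : CompR.mk R (op (pe R i) • (s • y)) (pe_op_smul_mem R i (s • y))
            = op (s.unop i) • CompR.mk R (op (pe R i) • y) (pe_op_smul_mem R i y) :=
          CompR.ext R (by
            simp only [CompR.val_smul, CompR.val_mk, MulOpposite.unop_op]
            rw [show (s • y : Y) = op s.unop • y from by rw [MulOpposite.op_unop],
              smul_smul, smul_smul, ← MulOpposite.op_mul, ← MulOpposite.op_mul,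
              mul_pe, pe_mul, Pi.single_eq_same])
        show ResR.mk R (h (CompR.mk R (op (pe R i) • (s • y)) _)) = _
        rw [h1, map_smul]
        rfl }
  refine ⟨H, ?_⟩
  intro x
  show ResR.mk R (h (CompR.mk R (op (pe R i) • f x) (pe_op_smul_mem R i (f x)))) = g x
  have h2 : CompR.mk R (op (pe R i) • f x) (pe_op_smul_mem R i (f x))
      = CompR.map R i f (CompR.mk R (op (pe R i) • x) (pe_op_smul_mem R i x)) :=
    CompR.ext R (by simp)
  rw [h2, hh]
  show ResR.mk R (ResR.val R (g (op (pe R i) • x))) = g x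
  rw [map_smul, ResR.mk_val, op_pe_smul_resR]

lemma inj_comp (I : Type u) [AddCommGroup I] [Module (∀ j, R j)ᵐᵒᵖ I]
    (hI : Module.Injective (∀ j, R j)ᵐᵒᵖ I) :
    Module.Injective (R i)ᵐᵒᵖ (CompR R i I) := by
  constructor
  intro X Y _ _ _ _ f hf g
  let g' : ResR R i X →ₗ[(∀ j, R j)ᵐᵒᵖ] I :=
    { toFun := fun x => CompR.val R (g (ResR.val R x))
      map_add' := fun x y => by simp [map_add]
      map_smul' := fun s x => by
        show CompR.val R (g (op (s.unop i) • ResR.val R x))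
          = s • CompR.val R (g (ResR.val R x))
        rw [map_smul, CompR.val_smul, MulOpposite.unop_op]
        conv_rhs => rw [← CompR.prop R (g (ResR.val R x))]
        rw [smul_smul]
        congr 1
        conv_rhs => rw [← MulOpposite.op_unop s]
        rw [← MulOpposite.op_mul, pe_mul] }
  obtain ⟨h, hh⟩ := hI.out (ResR.map R i f) (ResR.map_injective R i f hf) g'
  let H : Y →ₗ[(R i)ᵐᵒᵖ] CompR R i I :=
    { toFun := fun y => CompR.mk R (op (pe R i) • h (ResR.mk R y))
        (pe_op_smul_mem R i _)
      map_add' := fun x y => CompR.ext R (by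
        show op (pe R i) • h (ResR.mk R (x + y)) = _
        rw [show (ResR.mk R (x + y) : ResR R i Y) = ResR.mk R x + ResR.mk R y from rfl,
          map_add, smul_add]
        rfl)
      map_smul' := fun ρ y => CompR.ext R (by
        have h1 : (ResR.mk R (ρ • y) : ResR R i Y)
            = op (Pi.single i ρ.unop) • ResR.mk R y := by
          rw [op_single_smul_resR, MulOpposite.op_unop]
        show op (pe R i) • h (ResR.mk R (ρ • y)) = _
        rw [h1, map_smul]
        simp only [CompR.val_smul, CompR.val_mk, MulOpposite.unop_op]
        rw [smul_smul, smul_smul, ← MulOpposite.op_mul, ← MulOpposite.op_mul,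
          mul_pe, pe_mul, Pi.single_eq_same, Pi.single_eq_same]
        rfl) }
  refine ⟨H, ?_⟩
  intro x
  refine CompR.ext R ?_
  show op (pe R i) • h (ResR.mk R (f x)) = CompR.val R (g x)
  rw [show (ResR.mk R (f x) : ResR R i Y) = ResR.map R i f (ResR.mk R x) from rfl, hh]
  show op (pe R i) • CompR.val R (g x) = CompR.val R (g x)
  exact CompR.prop R (g x)

end InjTransfer


/-! ### Gorenstein flatness transfer helpers -/

section GFHelpers

/-- Gorenstein flatness is invariant under linear equivalence. -/
lemma gf_congr {R : Type u} [Ring R] {M M' : Type u}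
    [AddCommGroup M] [Module R M] [AddCommGroup M'] [Module R M']
    (h : IsGorensteinFlat R M) (e : M ≃ₗ[R] M') : IsGorensteinFlat R M' := by
  obtain ⟨W⟩ := h
  letI := W.acg
  letI := W.mod
  exact ⟨{ F := W.F, d := W.d, flat := W.flat, exact := W.exact,
           iso := e.symm.trans W.iso, tensorExact := W.tensorExact }⟩

/-- Exactness for products of functions. -/
lemma exact_pi_fun {κ : Type*} {P Q T : κ → Type*} [∀ i, Zero (T i)]
    (f : ∀ i, P i → Q i) (g : ∀ i, Q i → T i)
    (h : ∀ i, Function.Exact (f i) (g i)) :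
    Function.Exact (fun (x : ∀ i, P i) i => f i (x i))
      (fun (y : ∀ i, Q i) i => g i (y i)) := by
  intro y
  constructor
  · intro hy
    have : ∀ i, g i (y i) = 0 := fun i => congrFun hy i
    choose x hx using fun i => (h i (y i)).mp (this i)
    exact ⟨x, funext hx⟩
  · rintro ⟨x, rfl⟩
    funext i
    exact (h i).apply_apply_eq_zero (x i)

variable {n : ℕ} (R : Fin n → Type u) [∀ i, Ring (R i)] (i : Fin n)

/-- `ResL` commutes with taking ranges. -/
noncomputable def resLRangeEquiv {N N₁ : Type u} [AddCommGroup N] [Module (R i) N]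
    [AddCommGroup N₁] [Module (R i) N₁] (f : N →ₗ[R i] N₁) :
    ResL R i ↥(LinearMap.range f) ≃ₗ[∀ j, R j] ↥(LinearMap.range (ResL.map R i f)) where
  toFun x := ⟨ResL.mk R ((ResL.val R x).1 : N₁), by
    obtain ⟨m, hm⟩ := (ResL.val R x).2
    exact ⟨ResL.mk R m, congrArg (ResL.mk R) hm⟩⟩
  invFun z := ResL.mk R (⟨ResL.val R z.1, by
    obtain ⟨w, hw⟩ := z.2
    exact ⟨ResL.val R w, congrArg (ResL.val R) hw⟩⟩ : ↥(LinearMap.range f))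
  map_add' x y := Subtype.ext rfl
  map_smul' s x := Subtype.ext rfl
  left_inv x := congrArg (ResL.mk R) (Subtype.ext rfl)
  right_inv z := Subtype.ext rfl

/-- `CompL` commutes with taking ranges. -/
noncomputable def compLRangeEquiv {M₁ M₂ : Type u}
    [AddCommGroup M₁] [Module (∀ j, R j) M₁] [AddCommGroup M₂] [Module (∀ j, R j) M₂]
    (f : M₁ →ₗ[∀ j, R j] M₂) :
    CompL R i ↥(LinearMap.range f) ≃ₗ[R i] ↥(LinearMap.range (CompL.map R i f)) where
  toFun x := ⟨CompL.mk R ((CompL.val R x).1 : M₂) (congrArg Subtype.val x.2), by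
    obtain ⟨m, hm⟩ := (CompL.val R x).2
    refine ⟨CompL.mk R (pe R i • m) (pe_smul_mem R i m), CompL.ext R ?_⟩
    show f (pe R i • m) = (CompL.val R x).1
    rw [map_smul, hm]
    exact congrArg Subtype.val x.2⟩
  invFun z := ⟨(⟨CompL.val R z.1, by
      obtain ⟨y, hy⟩ := z.2
      exact ⟨CompL.val R y, congrArg (CompL.val R) hy⟩⟩ : ↥(LinearMap.range f)),
    Subtype.ext (CompL.prop R z.1)⟩
  map_add' x y := Subtype.ext (CompL.ext R rfl)
  map_smul' r x := Subtype.ext (CompL.ext R rfl)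
  left_inv x := Subtype.ext (Subtype.ext rfl)
  right_inv z := Subtype.ext (CompL.ext R rfl)

/-- Products commute with taking ranges. -/
noncomputable def piRangeEquiv {P Q : Fin n → Type u}
    [∀ i, AddCommGroup (P i)] [∀ i, Module (∀ j, R j) (P i)]
    [∀ i, AddCommGroup (Q i)] [∀ i, Module (∀ j, R j) (Q i)]
    (t : ∀ i, P i →ₗ[∀ j, R j] Q i) :
    (∀ i, ↥(LinearMap.range (t i))) ≃ₗ[∀ j, R j]
      ↥(LinearMap.range (LinearMap.pi (fun i => t i ∘ₗ LinearMap.proj i))) where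
  toFun x := ⟨fun i => (x i).1, by
    choose w hw using fun i => (x i).2
    exact ⟨w, funext hw⟩⟩
  invFun z := fun i => ⟨z.1 i, by
    obtain ⟨w, hw⟩ := z.2
    exact ⟨w i, congrFun hw i⟩⟩
  map_add' x y := Subtype.ext rfl
  map_smul' s x := Subtype.ext rfl
  left_inv x := funext fun i => Subtype.ext rfl
  right_inv z := Subtype.ext rfl

end GFHelpers


/-! ### Main Gorenstein flatness transfer lemmas -/

section GFMain

open MulOpposite

variable {n : ℕ} (R : Fin n → Type u) [∀ i, Ring (R i)] (i : Fin n)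

lemma gf_res (N : Type u) [AddCommGroup N] [Module (R i) N]
    (h : IsGorensteinFlat (R i) N) : IsGorensteinFlat (∀ j, R j) (ResL R i N) := by
  obtain ⟨W⟩ := h
  letI := W.acg
  letI := W.mod
  refine ⟨{ F := fun j => ResL R i (W.F j)
            d := fun j => ResL.map R i (W.d j)
            flat := fun j => flat_res R i _ (W.flat j)
            exact := fun j => ResL.map_exact R i _ _ (W.exact j)
            iso := (ResL.congr R i W.iso).trans (resLRangeEquiv R i (W.d 0))
            tensorExact := ?_ }⟩
  intro I _ _ hI j
  exact exact_of_conj (iso1 R i I (W.F j)) (iso1 R i I (W.F (j + 1)))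
    (iso1 R i I (W.F (j + 1 + 1)))
    (iso1_comm_map R i (W.d j)) (iso1_comm_map R i (W.d (j + 1)))
    (W.tensorExact (CompR R i I) (inj_comp R i I hI) j)

lemma gf_comp (M : Type u) [AddCommGroup M] [Module (∀ j, R j) M]
    (h : IsGorensteinFlat (∀ j, R j) M) : IsGorensteinFlat (R i) (CompL R i M) := by
  obtain ⟨W⟩ := h
  letI := W.acg
  letI := W.mod
  refine ⟨{ F := fun j => CompL R i (W.F j)
            d := fun j => CompL.map R i (W.d j)
            flat := fun j => flat_comp R i _ (W.flat j)
            exact := fun j => CompL.map_exact R i _ _ (W.exact j)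
            iso := (CompL.congr R i W.iso).trans (compLRangeEquiv R i (W.d 0))
            tensorExact := ?_ }⟩
  intro I _ _ hI j
  exact exact_of_conj (iso2 R i I (W.F j)) (iso2 R i I (W.F (j + 1)))
    (iso2 R i I (W.F (j + 1 + 1)))
    (iso2_comm_map R i (W.d j)) (iso2_comm_map R i (W.d (j + 1)))
    (W.tensorExact (ResR R i I) (inj_res R i I hI) j)

lemma gf_of_comp (B : Type u) [AddCommGroup B] [Module (∀ j, R j) B]
    (h : ∀ i, IsGorensteinFlat (R i) (CompL R i B)) :
    IsGorensteinFlat (∀ j, R j) B := by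
  have W : ∀ i, GorensteinFlatWitness (R i) (CompL R i B) := fun i => (h i).some
  letI : ∀ i j, AddCommGroup ((W i).F j) := fun i => (W i).acg
  letI : ∀ i j, Module (R i) ((W i).F j) := fun i => (W i).mod
  refine ⟨{ F := fun j => ∀ i, ResL R i ((W i).F j)
            d := fun j => LinearMap.pi
              (fun i => ResL.map R i ((W i).d j) ∘ₗ LinearMap.proj i)
            flat := fun j => flat_pi R _ (fun i => flat_res R i _ ((W i).flat j))
            exact := fun j => exact_pi_fun _ _
              (fun i => ResL.map_exact R i _ _ ((W i).exact j))
            iso := ((decompEquiv R B).trans (LinearEquiv.piCongrRight (fun i =>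
                (ResL.congr R i ((W i).iso)).trans
                  (resLRangeEquiv R i ((W i).d 0))))).trans
              (piRangeEquiv R (fun i => ResL.map R i ((W i).d 0)))
            tensorExact := ?_ }⟩
  intro I _ _ hI j
  let Φ : ∀ j' : ℤ, RTensor (∀ j, R j) I (∀ i, ResL R i ((W i).F j')) ≃ₗ[ℤ]
      ∀ i, RTensor (R i) (CompR R i I) ((W i).F j') := fun j' =>
    (iso3 (∀ j, R j) I _).trans
      (LinearEquiv.piCongrRight (fun i => iso1 R i I ((W i).F j')))
  have comm : ∀ j' : ℤ, (Φ (j' + 1)).toLinearMap ∘ₗ RTensor.map (∀ j, R j) I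
      (LinearMap.pi (fun i => ResL.map R i ((W i).d j') ∘ₗ LinearMap.proj i))
      = LinearMap.pi (fun i =>
          RTensor.map (R i) (CompR R i I) ((W i).d j') ∘ₗ LinearMap.proj i)
        ∘ₗ (Φ j').toLinearMap := by
    intro j'
    refine RTensor.hom_ext fun a b => ?_
    funext k
    simp only [Φ, LinearMap.comp_apply, LinearEquiv.coe_coe, LinearEquiv.trans_apply,
      LinearEquiv.piCongrRight_apply, RTensor.map_tmul, iso3_tmul_apply,
      LinearMap.pi_apply, LinearMap.proj_apply, iso1_tmul, ResL.map_val]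
    rfl
  exact exact_of_conj (Φ j) (Φ (j + 1)) (Φ (j + 1 + 1)) (comm j) (comm (j + 1))
    (exact_pi_fun _ _
      (fun k => (W k).tensorExact (CompR R k I) (inj_comp R k I hI) j))

end GFMain

/-- A direct product of rings is left GF-closed iff each factor is left GF-closed. -/
theorem leftGFClosed_pi_iff (n : ℕ) (R : Fin n → Type u) [∀ i, Ring (R i)] :
    LeftGFClosed (∀ i, R i) ↔ ∀ i, LeftGFClosed (R i) := by
  constructor
  · intro h i A B C _ _ _ _ _ _ f g hse hA hC
    have hse' : IsShortExact (ResL.map R i f) (ResL.map R i g) :=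
      ⟨ResL.map_injective R i f hse.1, ResL.map_exact R i f g hse.2.1,
        ResL.map_surjective R i g hse.2.2⟩
    have hB' := h (ResL R i A) (ResL R i B) (ResL R i C)
      (ResL.map R i f) (ResL.map R i g) hse' (gf_res R i A hA) (gf_res R i C hC)
    exact gf_congr (gf_comp R i (ResL R i B) hB') (CompL.resEquiv R i)
  · intro h A B C _ _ _ _ _ _ f g hse hA hC
    refine gf_of_comp R B (fun i => ?_)
    exact h i (CompL R i A) (CompL R i B) (CompL R i C)
      (CompL.map R i f) (CompL.map R i g)
      ⟨CompL.map_injective R i f hse.1, CompL.map_exact R i f g hse.2.1,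
        CompL.map_surjective R i g hse.2.2⟩
      (gf_comp R i A hA) (gf_comp R i C hC)
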